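/- Let A be a finite set of atoms and T a theory of S4F standpoint logic consisting of formulas only (no sharpening statements). An S5 standpoint structure F is a minimal model of T if and only if the theory of F, Th(F) := {ψ : ψ a formula and F ⊩ ψ}, is an expansion of T. -/

import Mathlib

/-- Formulas of S4F standpoint logic over atoms `A` and standpoint names `S`. -/
inductive SForm (A S : Type) : Type
  | atom : A → SForm A S
  | neg  : SForm A S → SForm A S
  | and  : SForm A S → SForm A S → SForm A S
  | box  : S → SForm A S → SForm A S

/-- Expressions: formulas or sharpening statements `s ≼ u`. -/
inductive SExpr (A S : Type) : Type
  | form  : SForm A S → SExpr A S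
  | sharp : S → S → SExpr A S

/-- S4F standpoint structures over a carrier type `P` of precisifications. -/
structure SFFS (A S P : Type) (star : S) where
  Pi : Set P
  sig : S → Set P
  tau : S → Set P
  val : P → Set A
  nonempty_Pi : Pi.Nonempty
  sig_sub : ∀ s, sig s ⊆ Pi
  tau_sub : ∀ s, tau s ⊆ Pi
  star_union : sig star ∪ tau star = Pi
  sig_nonempty : ∀ s, (sig s).Nonempty
  sig_tau_disj : ∀ s u, sig s ∩ tau u = ∅

/-- Pointed satisfaction `F, π ⊩ φ` for formulas. -/
def SFFS.sat {A S P : Type} {star : S} (F : SFFS A S P star) : SForm A S → P → Prop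
  | SForm.atom p, π => p ∈ F.val π
  | SForm.neg φ, π => ¬ F.sat φ π
  | SForm.and φ ψ, π => F.sat φ π ∧ F.sat ψ π
  | SForm.box s φ, π =>
      (π ∈ F.sig star → ∀ π' ∈ F.sig s, F.sat φ π') ∧
      (π ∈ F.tau star → ∀ π' ∈ F.sig s ∪ F.tau s, F.sat φ π')

/-- Pointed satisfaction for expressions. -/
def SFFS.satE {A S P : Type} {star : S} (F : SFFS A S P star) (e : SExpr A S) (π : P) : Prop :=
  match e with
  | SExpr.form φ => F.sat φ π
  | SExpr.sharp s u => F.sig s ⊆ F.sig u ∧ F.tau s ⊆ F.tau u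

/-- Global satisfaction `F ⊩ φ` of a formula. -/
def SFFS.models {A S P : Type} {star : S} (F : SFFS A S P star) (φ : SForm A S) : Prop :=
  ∀ π ∈ F.Pi, F.sat φ π

/-- Global satisfaction of an expression. -/
def SFFS.modelsE {A S P : Type} {star : S} (F : SFFS A S P star) (e : SExpr A S) : Prop :=
  ∀ π ∈ F.Pi, F.satE e π

/-- `F` is a model of a theory (set of expressions) `T`. -/
def SFFS.isModel {A S P : Type} {star : S} (F : SFFS A S P star) (T : Set (SExpr A S)) : Prop :=
  ∀ e ∈ T, F.modelsE e

/-- `F` is a model of a set of formulas `T`. -/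
def SFFS.isModelF {A S P : Type} {star : S} (F : SFFS A S P star) (T : Set (SForm A S)) : Prop :=
  ∀ φ ∈ T, F.models φ

/-- S5 standpoint structures: all outer sets empty. -/
def SFFS.IsS5 {A S P : Type} {star : S} (F : SFFS A S P star) : Prop :=
  ∀ s, F.tau s = ∅

/-- Determination preorder `F1 ⊴_s F2`, per standpoint. -/
def prefS {A S P1 P2 : Type} {star : S} (F1 : SFFS A S P1 star) (F2 : SFFS A S P2 star)
    (s : S) : Prop :=
  F2.val '' F2.sig s = F1.val '' F1.sig s ∧
  F2.val '' F2.tau s ⊆ F1.val '' (F1.sig s ∪ F1.tau s)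

/-- Determination preorder `F1 ⊴ F2`. -/
def pref {A S P1 P2 : Type} {star : S} (F1 : SFFS A S P1 star) (F2 : SFFS A S P2 star) : Prop :=
  ∀ s, prefS F1 F2 s

/-- Entailment `T ⊨ e`: every model of `T` satisfies `e`. -/
def Entails {A S : Type} (star : S) (T : Set (SExpr A S)) (e : SExpr A S) : Prop :=
  ∀ (P : Type) (F : SFFS A S P star), F.isModel T → F.modelsE e

/-- Derivable sharpening `T ⊢ s ≼ u`. -/
inductive Sharpens {A S : Type} (star : S) (T : Set (SExpr A S)) : S → S → Prop
  | of_mem {s u : S} : SExpr.sharp s u ∈ T → Sharpens star T s u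
  | to_star (s : S) : Sharpens star T s star
  | refl (s : S) : Sharpens star T s s
  | trans {s t u : S} : SExpr.sharp s t ∈ T → Sharpens star T t u → Sharpens star T s u

/-- An S5 standpoint structure `F` is a minimal model of a theory `T`. -/
def isMinimalModel {A S P : Type} {star : S} (F : SFFS A S P star) (T : Set (SExpr A S)) : Prop :=
  F.IsS5 ∧ F.isModel T ∧
  ∀ (P' : Type) (F' : SFFS A S P' star), pref F' F → F'.isModel T → (pref F' F ∧ pref F F')

/-- Entailment for sets of formulas. -/
def EntailsF {A S : Type} (star : S) (T : Set (SForm A S)) (ψ : SForm A S) : Prop :=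
  ∀ (P : Type) (F : SFFS A S P star), F.isModelF T → F.models ψ

/-- `U` is an expansion of `T`:
`U = {ψ | T ∪ {¬□_s φ : □_s φ ∉ U} ⊨ ψ}`. -/
def isExpansion {A S : Type} (star : S) (T U : Set (SForm A S)) : Prop :=
  U = {ψ | EntailsF star
        (T ∪ {χ | ∃ (s : S) (φ : SForm A S),
                    χ = SForm.neg (SForm.box s φ) ∧ SForm.box s φ ∉ U}) ψ}

/-- An S5 structure `F` is a minimal model of a set of formulas `T`. -/
def isMinimalModelF {A S P : Type} {star : S} (F : SFFS A S P star)
    (T : Set (SForm A S)) : Prop :=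
  F.IsS5 ∧ F.isModelF T ∧
  ∀ (P' : Type) (F' : SFFS A S P' star), pref F' F → F'.isModelF T →
    (pref F' F ∧ pref F F')

/-! ### Auxiliary machinery -/

section Aux

variable {A S P Q : Type} {star : S}

/-- The family of valuation sets of the inner (sig) parts. -/
def SLV {A S P : Type} {star : S} (F : SFFS A S P star) : S → Set (Set A) :=
  fun s => F.val '' F.sig s

lemma SL_sig_star (F : SFFS A S P star) (h5 : F.IsS5) : F.sig star = F.Pi := by
  have h := F.star_union
  rwa [h5 star, Set.union_empty] at h

lemma SL_not_tau (F : SFFS A S P star) {s u : S} {x : P} (hx : x ∈ F.sig s) :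
    x ∉ F.tau u := by
  intro h
  have hd := F.sig_tau_disj s u
  have : x ∈ F.sig s ∩ F.tau u := ⟨hx, h⟩
  rw [hd] at this
  exact this

lemma SL_sig_sub_star (F : SFFS A S P star) (s : S) : F.sig s ⊆ F.sig star := by
  intro x hx
  have hPi : x ∈ F.Pi := F.sig_sub s hx
  rw [← F.star_union] at hPi
  rcases hPi with h | h
  · exact h
  · exact absurd h (SL_not_tau F hx)

lemma SL_tau_sub_star (F : SFFS A S P star) (s : S) : F.tau s ⊆ F.tau star := by
  intro x hx
  have hPi : x ∈ F.Pi := F.tau_sub s hx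
  rw [← F.star_union] at hPi
  rcases hPi with h | h
  · exact absurd hx (SL_not_tau F h)
  · exact h

/-- Valuation-level evaluation of formulas relative to a family `V` of
valuation sets (one per standpoint). -/
def SEval {A S : Type} : SForm A S → Set A → (S → Set (Set A)) → Prop
  | SForm.atom p, v, _ => p ∈ v
  | SForm.neg φ, v, V => ¬ SEval φ v V
  | SForm.and φ ψ, v, V => SEval φ v V ∧ SEval ψ v V
  | SForm.box s φ, _, V => ∀ w ∈ V s, SEval φ w V

/-- At inner points, satisfaction is determined by the valuation and the
family of inner valuation sets. -/
lemma SL_innerEval (F : SFFS A S P star) :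
    ∀ (φ : SForm A S) (π : P), π ∈ F.sig star →
      (F.sat φ π ↔ SEval φ (F.val π) (SLV F)) := by
  intro φ
  induction φ with
  | atom p => intro π _; simp [SFFS.sat, SEval]
  | neg φ ih => intro π hπ; simp [SFFS.sat, SEval, ih π hπ]
  | and φ ψ ih1 ih2 => intro π hπ; simp [SFFS.sat, SEval, ih1 π hπ, ih2 π hπ]
  | box s φ ih =>
    intro π hπ
    have hnt : π ∉ F.tau star := SL_not_tau F hπ
    simp only [SFFS.sat, SEval]
    constructor
    · rintro ⟨h1, _⟩ w ⟨π', hπ', rfl⟩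
      exact (ih π' (SL_sig_sub_star F s hπ')).1 (h1 hπ π' hπ')
    · intro h
      refine ⟨fun _ π' hπ' => ?_, fun ht => absurd ht hnt⟩
      exact (ih π' (SL_sig_sub_star F s hπ')).2 (h _ ⟨π', hπ', rfl⟩)

lemma SL_modelsEval (F : SFFS A S P star) (h5 : F.IsS5) (φ : SForm A S) :
    F.models φ ↔ ∀ w ∈ SLV F star, SEval φ w (SLV F) := by
  constructor
  · rintro h w ⟨π, hπ, rfl⟩
    exact (SL_innerEval F φ π hπ).1 (h π (F.sig_sub star hπ))
  · intro h π hπ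
    rw [← SL_sig_star F h5] at hπ
    exact (SL_innerEval F φ π hπ).2 (h _ ⟨π, hπ, rfl⟩)

lemma SL_models_box (F : SFFS A S P star) (h5 : F.IsS5) (s : S) (φ : SForm A S) :
    F.models (SForm.box s φ) ↔ ∀ w ∈ SLV F s, SEval φ w (SLV F) := by
  rw [SL_modelsEval F h5]
  obtain ⟨π0, hπ0⟩ := F.sig_nonempty star
  constructor
  · intro h; exact h (F.val π0) ⟨π0, hπ0, rfl⟩
  · intro h w _; exact h

lemma SL_models_neg_box (F : SFFS A S P star) (h5 : F.IsS5) {s : S} {φ : SForm A S}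
    (h : ¬ F.models (SForm.box s φ)) : F.models (SForm.neg (SForm.box s φ)) := by
  rw [SL_models_box F h5] at h
  intro π hπ
  rw [← SL_sig_star F h5] at hπ
  have := SL_innerEval F (SForm.neg (SForm.box s φ)) π hπ
  rw [this]
  simpa [SEval] using h

end Aux
section Aux2

variable {A S P : Type} {star : S}

open Classical in
/-- Literal describing whether `p` belongs to the valuation `v`. -/
noncomputable def SLlit {A : Type} (S : Type) (v : Set A) (p : A) : SForm A S :=
  if p ∈ v then SForm.atom p else SForm.neg (SForm.atom p)

/-- A formula characterizing the valuation `v` exactly (needs a witness atom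
`a₀` for the trivially true base case). -/
noncomputable def SLform {A : Type} (S : Type) [Fintype A] (a₀ : A) (v : Set A) : SForm A S :=
  Finset.univ.toList.foldr (fun p acc => SForm.and (SLlit S v p) acc)
    (SForm.neg (SForm.and (SForm.atom a₀) (SForm.neg (SForm.atom a₀))))

lemma SL_sat_lit (F : SFFS A S P star) (v : Set A) (p : A) (π : P) :
    F.sat (SLlit S v p) π ↔ (p ∈ v ↔ p ∈ F.val π) := by
  unfold SLlit
  by_cases h : p ∈ v <;> simp [h, SFFS.sat]

lemma SL_sat_form [Fintype A] (F : SFFS A S P star) (a₀ : A) (v : Set A) (π : P) :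
    F.sat (SLform S a₀ v) π ↔ F.val π = v := by
  have key : ∀ l : List A,
      F.sat (l.foldr (fun p acc => SForm.and (SLlit S v p) acc)
        (SForm.neg (SForm.and (SForm.atom a₀) (SForm.neg (SForm.atom a₀)))) ) π ↔
      ∀ p ∈ l, (p ∈ v ↔ p ∈ F.val π) := by
    intro l
    induction l with
    | nil => simp [SFFS.sat]
    | cons p l ih => simp [SFFS.sat, ih, SL_sat_lit]
  unfold SLform
  rw [key]
  simp only [Finset.mem_toList, Finset.mem_univ, true_implies]
  rw [Set.ext_iff]
  constructor
  · intro h; intro x; exact (h x).symm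
  · intro h; intro x; exact (h x).symm

lemma SL_seval_lit (v w : Set A) (p : A) (V : S → Set (Set A)) :
    SEval (SLlit S v p) w V ↔ (p ∈ v ↔ p ∈ w) := by
  unfold SLlit
  by_cases h : p ∈ v <;> simp [h, SEval]

lemma SL_seval_form [Fintype A] (a₀ : A) (v w : Set A) (V : S → Set (Set A)) :
    SEval (SLform S a₀ v) w V ↔ w = v := by
  have key : ∀ l : List A,
      SEval (l.foldr (fun p acc => SForm.and (SLlit S v p) acc)
        (SForm.neg (SForm.and (SForm.atom a₀) (SForm.neg (SForm.atom a₀)))) ) w V ↔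
      ∀ p ∈ l, (p ∈ v ↔ p ∈ w) := by
    intro l
    induction l with
    | nil => simp [SEval]
    | cons p l ih => simp [SEval, ih, SL_seval_lit]
  unfold SLform
  rw [key]
  simp only [Finset.mem_toList, Finset.mem_univ, true_implies]
  rw [Set.ext_iff]
  constructor
  · intro h; intro x; exact (h x).symm
  · intro h; intro x; exact (h x).symm

/-- Extract an atom witnessing difference of two sets of atoms. -/
lemma SL_exists_atom {v w : Set A} (h : v ≠ w) : Nonempty A := by
  by_contra hc
  exact h (by ext a; exact absurd ⟨a⟩ hc)

end Aux2
section Aux3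

variable {A S P Q : Type} {star : S}

/-- Glue an S5 structure `F` (as inner part) with a region `O` of a structure
`G` (as outer part). -/
def SLsum (F : SFFS A S P star) (G : SFFS A S Q star) (O : S → Set Q)
    (hsub : ∀ s, O s ⊆ O star) (hO : O star ⊆ G.Pi)
    (hstar : F.sig star = F.Pi) : SFFS A S (P ⊕ Q) star where
  Pi := Sum.inl '' F.Pi ∪ Sum.inr '' O star
  sig s := Sum.inl '' F.sig s
  tau s := Sum.inr '' O s
  val := Sum.elim F.val G.val
  nonempty_Pi := by
    obtain ⟨π, hπ⟩ := F.nonempty_Pi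
    exact ⟨Sum.inl π, Or.inl ⟨π, hπ, rfl⟩⟩
  sig_sub := by
    rintro s _ ⟨π, hπ, rfl⟩
    exact Or.inl ⟨π, F.sig_sub s hπ, rfl⟩
  tau_sub := by
    rintro s _ ⟨π, hπ, rfl⟩
    exact Or.inr ⟨π, hsub s hπ, rfl⟩
  star_union := by
    show Sum.inl '' F.sig star ∪ _ = _
    rw [hstar]
  sig_nonempty := by
    intro s
    obtain ⟨π, hπ⟩ := F.sig_nonempty s
    exact ⟨Sum.inl π, π, hπ, rfl⟩
  sig_tau_disj := by
    intro s u
    ext x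
    simp only [Set.mem_inter_iff, Set.mem_image, Set.mem_empty_iff_false, iff_false]
    rintro ⟨⟨π, _, rfl⟩, ⟨π', _, h⟩⟩
    exact absurd h (by simp)

lemma SLsum_V (F : SFFS A S P star) (G : SFFS A S Q star) (O : S → Set Q)
    (hsub : ∀ s, O s ⊆ O star) (hO : O star ⊆ G.Pi) (hstar : F.sig star = F.Pi) :
    SLV (SLsum F G O hsub hO hstar) = SLV F := by
  funext s
  show Sum.elim F.val G.val '' (Sum.inl '' F.sig s) = F.val '' F.sig s
  rw [Set.image_image]
  rfl

lemma SLsum_left (F : SFFS A S P star) (G : SFFS A S Q star) (O : S → Set Q)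
    (hsub : ∀ s, O s ⊆ O star) (hO : O star ⊆ G.Pi) (hstar : F.sig star = F.Pi)
    (φ : SForm A S) (π : P) (hπ : π ∈ F.sig star) :
    ((SLsum F G O hsub hO hstar).sat φ (Sum.inl π) ↔ F.sat φ π) := by
  have h1 : Sum.inl π ∈ (SLsum F G O hsub hO hstar).sig star := ⟨π, hπ, rfl⟩
  rw [SL_innerEval _ φ _ h1, SLsum_V, SL_innerEval F φ π hπ]
  rfl

lemma SL_pref_sum (F : SFFS A S P star) (h5 : F.IsS5) (G : SFFS A S Q star) (O : S → Set Q)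
    (hsub : ∀ s, O s ⊆ O star) (hO : O star ⊆ G.Pi) (hstar : F.sig star = F.Pi) :
    pref (SLsum F G O hsub hO hstar) F := by
  intro s
  constructor
  · show F.val '' F.sig s = Sum.elim F.val G.val '' (Sum.inl '' F.sig s)
    rw [Set.image_image]
    rfl
  · simp [h5 s]

lemma SL_pref_sum_extract (F : SFFS A S P star) (h5 : F.IsS5) (G : SFFS A S Q star)
    (O : S → Set Q) (hsub : ∀ s, O s ⊆ O star) (hO : O star ⊆ G.Pi)
    (hstar : F.sig star = F.Pi)
    (h : pref F (SLsum F G O hsub hO hstar)) (s : S) :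
    G.val '' O s ⊆ SLV F s := by
  have h2 := (h s).2
  have e2 : F.val '' (F.sig s ∪ F.tau s) = SLV F s := by
    rw [h5 s, Set.union_empty]; rfl
  rw [e2] at h2
  intro w hw
  apply h2
  show w ∈ Sum.elim F.val G.val '' (Sum.inr '' O s)
  rw [Set.image_image]
  exact hw

end Aux3
section Aux4

variable {A S P Q : Type} {star : S}

lemma SL_sumRight_sig (F : SFFS A S P star) (G : SFFS A S Q star)
    (hstar : F.sig star = F.Pi)
    (hN : ∀ (s : S) (φ : SForm A S), (∀ w ∈ SLV G s, SEval φ w (SLV G)) →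
       ∀ w ∈ SLV F s, SEval φ w (SLV F)) :
    ∀ (φ : SForm A S) (π : Q), π ∈ G.sig star →
      ((SLsum F G G.sig (SL_sig_sub_star G) (G.sig_sub star) hstar).sat φ (Sum.inr π)
        ↔ G.sat φ π) := by
  set H := SLsum F G G.sig (SL_sig_sub_star G) (G.sig_sub star) hstar with hH
  intro φ
  induction φ with
  | atom p => intro π hπ; exact Iff.rfl
  | neg φ ih =>
    intro π hπ
    simp only [SFFS.sat, ih π hπ]
  | and φ ψ ih1 ih2 =>
    intro π hπ
    simp only [SFFS.sat, ih1 π hπ, ih2 π hπ]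
  | box s φ ih =>
    intro π hπ
    have hmemtau : Sum.inr π ∈ H.tau star := ⟨π, hπ, rfl⟩
    have hnotsig : Sum.inr π ∉ H.sig star := by
      rintro ⟨π', -, h⟩
      exact Sum.inl_ne_inr h
    have hGnt : π ∉ G.tau star := SL_not_tau G hπ
    have bridge : (∀ π' ∈ G.sig s, G.sat φ π') →
        ∀ w ∈ SLV F s, SEval φ w (SLV F) := by
      intro hg
      apply hN s φ
      rintro w ⟨π', hπ', rfl⟩
      exact (SL_innerEval G φ π' (SL_sig_sub_star G s hπ')).1 (hg π' hπ')
    simp only [SFFS.sat]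
    constructor
    · rintro ⟨-, h2⟩
      have hall := h2 hmemtau
      refine ⟨fun _ π' hπ' => ?_, fun ht => absurd ht hGnt⟩
      have hm := hall (Sum.inr π') (Or.inr ⟨π', hπ', rfl⟩)
      exact (ih π' (SL_sig_sub_star G s hπ')).1 hm
    · intro hg
      have hGall : ∀ π' ∈ G.sig s, G.sat φ π' := hg.1 hπ
      refine ⟨fun hs => absurd hs hnotsig, fun _ x hx => ?_⟩
      rcases hx with ⟨π', hπ', rfl⟩ | ⟨π', hπ', rfl⟩
      · rw [SLsum_left F G G.sig (SL_sig_sub_star G) (G.sig_sub star) hstar φ π'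
          (SL_sig_sub_star F s hπ')]
        exact (SL_innerEval F φ π' (SL_sig_sub_star F s hπ')).2
          (bridge hGall (F.val π') ⟨π', hπ', rfl⟩)
      · exact (ih π' (SL_sig_sub_star G s hπ')).2 (hGall π' hπ')

lemma SL_sumRight_tau (F : SFFS A S P star) (G : SFFS A S Q star)
    (hstar : F.sig star = F.Pi) (hVeq : SLV G = SLV F) :
    ∀ (φ : SForm A S) (π : Q), π ∈ G.tau star →
      ((SLsum F G G.tau (SL_tau_sub_star G) (G.tau_sub star) hstar).sat φ (Sum.inr π)
        ↔ G.sat φ π) := by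
  set H := SLsum F G G.tau (SL_tau_sub_star G) (G.tau_sub star) hstar with hH
  intro φ
  induction φ with
  | atom p => intro π hπ; exact Iff.rfl
  | neg φ ih =>
    intro π hπ
    simp only [SFFS.sat, ih π hπ]
  | and φ ψ ih1 ih2 =>
    intro π hπ
    simp only [SFFS.sat, ih1 π hπ, ih2 π hπ]
  | box s φ ih =>
    intro π hπ
    have hmemtau : Sum.inr π ∈ H.tau star := ⟨π, hπ, rfl⟩
    have hnotsig : Sum.inr π ∉ H.sig star := by
      rintro ⟨π', -, h⟩
      exact Sum.inl_ne_inr h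
    have hGns : π ∉ G.sig star := fun hs => absurd hπ (SL_not_tau G hs)
    have bridge : (∀ π' ∈ G.sig s, G.sat φ π') ↔
        ∀ w ∈ SLV F s, SEval φ w (SLV F) := by
      rw [← hVeq]
      constructor
      · rintro h w ⟨π', hπ', rfl⟩
        exact (SL_innerEval G φ π' (SL_sig_sub_star G s hπ')).1 (h π' hπ')
      · intro h π' hπ'
        exact (SL_innerEval G φ π' (SL_sig_sub_star G s hπ')).2 (h _ ⟨π', hπ', rfl⟩)
    simp only [SFFS.sat]
    constructor
    · rintro ⟨-, h2⟩
      have hall := h2 hmemtau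
      have hFside : ∀ w ∈ SLV F s, SEval φ w (SLV F) := by
        rintro w ⟨π', hπ', rfl⟩
        have hm := hall (Sum.inl π') (Or.inl ⟨π', hπ', rfl⟩)
        rw [SLsum_left F G G.tau (SL_tau_sub_star G) (G.tau_sub star) hstar φ π'
          (SL_sig_sub_star F s hπ')] at hm
        exact (SL_innerEval F φ π' (SL_sig_sub_star F s hπ')).1 hm
      refine ⟨fun hs => absurd hs hGns, fun _ π' hπ' => ?_⟩
      rcases hπ' with h | h
      · exact bridge.2 hFside π' h
      · have hm := hall (Sum.inr π') (Or.inr ⟨π', h, rfl⟩)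
        exact (ih π' (SL_tau_sub_star G s h)).1 hm
    · intro hg
      have hall : ∀ π' ∈ G.sig s ∪ G.tau s, G.sat φ π' := hg.2 hπ
      refine ⟨fun hs => absurd hs hnotsig, fun _ x hx => ?_⟩
      rcases hx with ⟨π', hπ', rfl⟩ | ⟨π', hπ', rfl⟩
      · rw [SLsum_left F G G.tau (SL_tau_sub_star G) (G.tau_sub star) hstar φ π'
          (SL_sig_sub_star F s hπ')]
        have hFside := bridge.1 (fun π'' hπ'' => hall π'' (Or.inl hπ''))
        exact (SL_innerEval F φ π' (SL_sig_sub_star F s hπ')).2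
          (hFside _ ⟨π', hπ', rfl⟩)
      · exact (ih π' (SL_tau_sub_star G s hπ')).2 (hall π' (Or.inr hπ'))

lemma SL_outerEval (G : SFFS A S Q star) (VF : S → Set (Set A)) (hVeq : SLV G = VF)
    (hTau : ∀ s, G.val '' G.tau s ⊆ VF s) :
    ∀ (φ : SForm A S) (π : Q), π ∈ G.tau star →
      (G.sat φ π ↔ SEval φ (G.val π) VF) := by
  intro φ
  induction φ with
  | atom p => intro π hπ; exact Iff.rfl
  | neg φ ih =>
    intro π hπ
    simp only [SFFS.sat, SEval, ih π hπ]
  | and φ ψ ih1 ih2 =>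
    intro π hπ
    simp only [SFFS.sat, SEval, ih1 π hπ, ih2 π hπ]
  | box s φ ih =>
    intro π hπ
    have hGns : π ∉ G.sig star := fun hs => absurd hπ (SL_not_tau G hs)
    simp only [SFFS.sat, SEval]
    constructor
    · rintro ⟨-, h2⟩ w hw
      rw [← hVeq] at hw
      obtain ⟨π', hπ', rfl⟩ := hw
      have hm := h2 hπ π' (Or.inl hπ')
      rw [SL_innerEval G φ π' (SL_sig_sub_star G s hπ'), hVeq] at hm
      exact hm
    · intro h
      refine ⟨fun hs => absurd hs hGns, fun _ π' hπ' => ?_⟩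
      rcases hπ' with hm | hm
      · rw [SL_innerEval G φ π' (SL_sig_sub_star G s hm), hVeq]
        apply h
        rw [← hVeq]
        exact ⟨π', hm, rfl⟩
      · exact (ih π' (SL_tau_sub_star G s hm)).2 (h _ (hTau s ⟨π', hm, rfl⟩))

end Aux4
section Main

variable {A S P : Type} {star : S}

/-- Expansion implies minimal model. -/
lemma SL_dir2 [Fintype A] (T : Set (SForm A S)) (F : SFFS A S P star) (hS5 : F.IsS5)
    (hExp : isExpansion star T {ψ | F.models ψ}) : isMinimalModelF F T := by
  unfold isExpansion at hExp
  refine ⟨hS5, ?_, ?_⟩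
  · intro φ hφ
    have hm : φ ∈ {ψ | F.models ψ} := by
      rw [hExp]
      intro P1 G hG
      exact hG φ (Or.inl hφ)
    exact hm
  · intro P' F' hpf hT'
    refine ⟨hpf, ?_⟩
    have hVeq : SLV F' = SLV F := by
      funext s
      exact ((hpf s).1).symm
    -- F' is a model of the negative introspection set
    have hFN : F'.isModelF {χ | ∃ (s : S) (φ : SForm A S),
        χ = SForm.neg (SForm.box s φ) ∧ SForm.box s φ ∉ {ψ | F.models ψ}} := by
      rintro χ ⟨s, φ, rfl, hnb⟩
      have hnb' : ¬ ∀ w ∈ SLV F s, SEval φ w (SLV F) := by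
        intro hc
        exact hnb ((SL_models_box F hS5 s φ).2 hc)
      push_neg at hnb'
      obtain ⟨w₀, hw₀, hbad⟩ := hnb'
      intro π hπ
      simp only [SFFS.sat]
      intro hb
      have hall : ∀ π' ∈ F'.sig s, F'.sat φ π' := by
        rw [← F'.star_union] at hπ
        rcases hπ with h | h
        · exact hb.1 h
        · exact fun π' hπ' => hb.2 h π' (Or.inl hπ')
      have hev : ∀ w ∈ SLV F' s, SEval φ w (SLV F') := by
        rintro w ⟨π', hπ', rfl⟩
        exact (SL_innerEval F' φ π' (SL_sig_sub_star F' s hπ')).1 (hall π' hπ')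
      rw [hVeq] at hev
      exact hbad (hev w₀ hw₀)
    intro s
    refine ⟨((hpf s).1).symm, ?_⟩
    rintro w ⟨x, hx, rfl⟩
    have hgoal : F'.val x ∈ SLV F s → F'.val x ∈ F.val '' (F.sig s ∪ F.tau s) := by
      rintro ⟨π', hπ', he⟩
      exact ⟨π', Or.inl hπ', he⟩
    apply hgoal
    by_contra hv
    obtain ⟨π₁, hπ₁⟩ := F.sig_nonempty s
    have hne : F.val π₁ ≠ F'.val x := fun he => hv ⟨π₁, hπ₁, he⟩
    obtain ⟨a₀⟩ := SL_exists_atom hne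
    have hbox : F.models (SForm.box s (SForm.neg (SLform S a₀ (F'.val x)))) := by
      intro π hπ
      refine ⟨fun _ π' hπ' => ?_, fun ht => absurd ht (by rw [hS5 star]; exact Set.notMem_empty π)⟩
      have hne' : F.val π' ≠ F'.val x := fun he => hv ⟨π', hπ', he⟩
      simp only [SFFS.sat]
      exact fun hs => hne' ((SL_sat_form F a₀ (F'.val x) π').1 hs)
    have hmem : SForm.box s (SForm.neg (SLform S a₀ (F'.val x))) ∈ {ψ | F.models ψ} := hbox
    rw [hExp] at hmem
    simp only [Set.mem_setOf_eq] at hmem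
    have hFmodels : F'.isModelF (T ∪ {χ | ∃ (s : S) (φ : SForm A S),
        χ = SForm.neg (SForm.box s φ) ∧ SForm.box s φ ∉ {ψ | F.models ψ}}) := by
      rintro χ (h | h)
      · exact hT' χ h
      · exact hFN χ h
    have hbx := hmem _ F' hFmodels
    have hxPi : x ∈ F'.Pi := F'.tau_sub s hx
    have hxts : x ∈ F'.tau star := SL_tau_sub_star F' s hx
    have hsat := hbx x hxPi
    simp only [SFFS.sat] at hsat
    have hneg := hsat.2 hxts x (Or.inr hx)
    exact hneg ((SL_sat_form F' a₀ (F'.val x) x).2 rfl)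

/-- Minimal model implies expansion. -/
lemma SL_dir1 [Fintype A] (T : Set (SForm A S)) (F : SFFS A S P star)
    (hMin : isMinimalModelF F T) : isExpansion star T {ψ | F.models ψ} := by
  obtain ⟨h5, hT, hmin⟩ := hMin
  unfold isExpansion
  ext ψ
  simp only [Set.mem_setOf_eq]
  constructor
  · intro hψ P1 G hG
    have hGT : G.isModelF T := fun φ hφ => hG φ (Or.inl hφ)
    have hGN : ∀ (s : S) (φ : SForm A S), ¬ F.models (SForm.box s φ) →
        G.models (SForm.neg (SForm.box s φ)) := fun s φ h => hG _ (Or.inr ⟨s, φ, rfl, h⟩)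
    have hStepA : ∀ (s : S) (φ : SForm A S), (∀ w ∈ SLV G s, SEval φ w (SLV G)) →
        ∀ w ∈ SLV F s, SEval φ w (SLV F) := by
      intro s φ hg
      by_contra hc
      push_neg at hc
      obtain ⟨w₀, hw₀, hbad⟩ := hc
      have hnb : ¬ F.models (SForm.box s φ) := by
        rw [SL_models_box F h5]
        push_neg
        exact ⟨w₀, hw₀, hbad⟩
      obtain ⟨π₀, hπ₀⟩ := G.sig_nonempty star
      have hsat := hGN s φ hnb π₀ (G.sig_sub star hπ₀)
      simp only [SFFS.sat] at hsat
      apply hsat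
      refine ⟨fun _ π' hπ' => ?_, fun ht => absurd ht (SL_not_tau G hπ₀)⟩
      exact (SL_innerEval G φ π' (SL_sig_sub_star G s hπ')).2 (hg _ ⟨π', hπ', rfl⟩)
    have hsub1 : ∀ s, SLV F s ⊆ SLV G s := by
      intro s v hv
      by_contra hnv
      obtain ⟨wg, hwg⟩ := G.sig_nonempty s
      have hne : G.val wg ≠ v := fun he => hnv ⟨wg, hwg, he⟩
      obtain ⟨a₀⟩ := SL_exists_atom hne
      have hpre : ∀ w ∈ SLV G s, SEval (SForm.neg (SLform S a₀ v)) w (SLV G) := by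
        intro w hw
        simp only [SEval]
        rw [SL_seval_form]
        rintro rfl
        exact hnv hw
      have hcon := hStepA s _ hpre v hv
      simp only [SEval] at hcon
      rw [SL_seval_form] at hcon
      exact hcon rfl
    have hstar : F.sig star = F.Pi := SL_sig_star F h5
    have hHT : (SLsum F G G.sig (SL_sig_sub_star G) (G.sig_sub star) hstar).isModelF T := by
      intro φ hφ π hπ
      rcases hπ with ⟨π', hπ', rfl⟩ | ⟨π', hπ', rfl⟩
      · rw [SLsum_left F G G.sig (SL_sig_sub_star G) (G.sig_sub star) hstar φ π'
          (by rw [hstar]; exact hπ')]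
        exact hT φ hφ π' hπ'
      · rw [SL_sumRight_sig F G hstar hStepA φ π' hπ']
        exact hGT φ hφ π' (G.sig_sub star hπ')
    obtain ⟨-, hFH⟩ := hmin _ _
      (SL_pref_sum F h5 G G.sig (SL_sig_sub_star G) (G.sig_sub star) hstar) hHT
    have hsub2 : ∀ s, SLV G s ⊆ SLV F s :=
      fun s => SL_pref_sum_extract F h5 G G.sig (SL_sig_sub_star G) (G.sig_sub star) hstar hFH s
    have hVeq : SLV G = SLV F := by
      funext s
      exact Set.Subset.antisymm (hsub2 s) (hsub1 s)
    have hF2T : (SLsum F G G.tau (SL_tau_sub_star G) (G.tau_sub star) hstar).isModelF T := by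
      intro φ hφ π hπ
      rcases hπ with ⟨π', hπ', rfl⟩ | ⟨π', hπ', rfl⟩
      · rw [SLsum_left F G G.tau (SL_tau_sub_star G) (G.tau_sub star) hstar φ π'
          (by rw [hstar]; exact hπ')]
        exact hT φ hφ π' hπ'
      · rw [SL_sumRight_tau F G hstar hVeq φ π' hπ']
        exact hGT φ hφ π' (G.tau_sub star hπ')
    obtain ⟨-, hFF2⟩ := hmin _ _
      (SL_pref_sum F h5 G G.tau (SL_tau_sub_star G) (G.tau_sub star) hstar) hF2T
    have hTauSub : ∀ s, G.val '' G.tau s ⊆ SLV F s :=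
      fun s => SL_pref_sum_extract F h5 G G.tau (SL_tau_sub_star G) (G.tau_sub star) hstar hFF2 s
    have hAll : ∀ w ∈ SLV F star, SEval ψ w (SLV F) := (SL_modelsEval F h5 ψ).1 hψ
    intro π hπ
    rw [← G.star_union] at hπ
    rcases hπ with h | h
    · rw [SL_innerEval G ψ π h, hVeq]
      have hmem : G.val π ∈ SLV G star := ⟨π, h, rfl⟩
      rw [hVeq] at hmem
      exact hAll _ hmem
    · rw [SL_outerEval G (SLV F) hVeq hTauSub ψ π h]
      exact hAll _ (hTauSub star ⟨π, h, rfl⟩)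
  · intro h
    apply h P F
    rintro χ (hχ | ⟨s, φ, rfl, hnb⟩)
    · exact hT χ hχ
    · exact SL_models_neg_box F h5 hnb

end Main
/-- An S5 standpoint structure `F` is a minimal model of `T` iff
`Th(F) = {ψ : F ⊩ ψ}` is an expansion of `T`. -/
theorem minimal_model_iff_expansion {A S P : Type} [Fintype A] (star : S)
    (T : Set (SForm A S)) (F : SFFS A S P star) (hS5 : F.IsS5) :
    isMinimalModelF F T ↔ isExpansion star T {ψ | F.models ψ} :=
  ⟨fun h => SL_dir1 T F h, fun h => SL_dir2 T F hS5 h⟩
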